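/- Let π : Y → X be a continuous surjective map between topological spaces. Then the following are equivalent: (a) for every closed subset G ⊆ Y, the set {x ∈ X : π⁻¹(cl({x})) ⊆ G} is closed in X; (b) for every lower semicontinuous function f : Y → [0,∞], the function x ↦ sup{f(y) : y ∈ π⁻¹(cl({x}))} (supremum taken in the extended nonnegative reals) is lower semicontinuous on X. -/

import Mathlib

open TopologicalSpace

/-- For a continuous surjection `π : Y → X`: the set `{x : π⁻¹(cl{x}) ⊆ G}` is closed for
every closed `G ⊆ Y` iff for every lower semicontinuous `f : Y → [0,∞]` the function
`x ↦ sup f(π⁻¹(cl{x}))` is lower semicontinuous. -/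
theorem stmt6 {Y X : Type*} [TopologicalSpace Y] [TopologicalSpace X]
    (π : Y → X) (hc : Continuous π) (hs : Function.Surjective π) :
    (∀ G : Set Y, IsClosed G → IsClosed {x : X | π ⁻¹' closure {x} ⊆ G}) ↔
      (∀ f : Y → ENNReal, LowerSemicontinuous f →
        LowerSemicontinuous fun x : X => ⨆ y ∈ π ⁻¹' closure {x}, f y) := by
  constructor
  · intro h f hf
    rw [lowerSemicontinuous_iff_isClosed_preimage]
    intro t
    have : (fun x : X => ⨆ y ∈ π ⁻¹' closure {x}, f y) ⁻¹' Set.Iic t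
        = {x : X | π ⁻¹' closure {x} ⊆ f ⁻¹' Set.Iic t} := by
      ext x
      simp [iSup₂_le_iff, Set.subset_def]
    rw [this]
    exact h _ ((lowerSemicontinuous_iff_isClosed_preimage.1 hf) t)
  · intro h G hG
    classical
    set f : Y → ENNReal := fun y => if y ∈ G then 0 else ⊤ with hfdef
    have hf : LowerSemicontinuous f := by
      rw [lowerSemicontinuous_iff_isOpen_preimage]
      intro t
      rcases eq_or_ne t ⊤ with rfl | ht
      · convert isOpen_empty
        ext y
        simp [f]
      · have : f ⁻¹' Set.Ioi t = Gᶜ := by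
          ext y
          by_cases hy : y ∈ G <;> simp [f, hy, ht.lt_top, (not_lt_of_ge (zero_le (a := t)))]
        rw [this]
        exact hG.isOpen_compl
    have hF := h f hf
    have : {x : X | π ⁻¹' closure {x} ⊆ G}
        = (fun x : X => ⨆ y ∈ π ⁻¹' closure {x}, f y) ⁻¹' Set.Iic 1 := by
      ext x
      simp only [Set.mem_setOf_eq, Set.mem_preimage, Set.mem_Iic, iSup₂_le_iff]
      constructor
      · intro hx y hy
        simp [f, hx hy]
      · intro hx y hy
        by_contra hyG
        have := hx y hy
        simp [f, hyG] at this
    rw [this]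
    exact (lowerSemicontinuous_iff_isClosed_preimage.1 hF) 1
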